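/- The horseshoe density with τ = 1 satisfies the two-sided bounds (K/2) log(1 + 4/β²) ≤ π(β) ≤ K log(1 + 2/β²) for all β ≠ 0, where K = 1/√(2π³). -/

import Mathlib

open Real MeasureTheory Set

/-- The horseshoe density with scale `τ = 1`. -/
noncomputable def horseshoeDensity (β : ℝ) : ℝ :=
  ∫ lam in Ioi (0 : ℝ),
    (1 / Real.sqrt (2 * Real.pi * lam ^ 2)) * Real.exp (-β ^ 2 / (2 * lam ^ 2)) *
      (2 / (Real.pi * (1 + lam ^ 2)))

/-! ### Auxiliary lemmas -/

lemma hs_int_exp_mul (u : ℝ) (hu : 0 < u) : ∫ t in Ioi (0:ℝ), exp (-(u*t)) = u⁻¹ := by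
  have := integral_comp_mul_left_Ioi (fun x => exp (-x)) 0 hu
  simp only [mul_zero, integral_exp_neg_Ioi, neg_zero, exp_zero, smul_eq_mul, mul_one] at this
  simpa using this

lemma hs_prod_integrable (s a : ℝ) (hs : 0 < s) (ha : 0 < a) :
    Integrable (Function.uncurry fun (t u : ℝ) => exp (-(u*t)))
      ((volume.restrict (Ioi 0)).prod (volume.restrict (Ioc s (s+a)))) := by
  have hmeas : AEStronglyMeasurable (Function.uncurry fun (t u : ℝ) => exp (-(u*t)))
      ((volume.restrict (Ioi 0)).prod (volume.restrict (Ioc s (s+a)))) := by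
    apply Continuous.aestronglyMeasurable
    exact (continuous_snd.mul continuous_fst).neg.rexp
  rw [integrable_prod_iff hmeas]
  constructor
  · filter_upwards [ae_restrict_mem measurableSet_Ioi] with t ht
    exact (Continuous.integrableOn_Ioc (by continuity))
  · apply Integrable.mono' ((exp_neg_integrableOn_Ioi 0 hs).const_mul a)
    · exact hmeas.norm.integral_prod_right'
    · filter_upwards [ae_restrict_mem measurableSet_Ioi] with t ht
      rw [Real.norm_eq_abs, abs_of_nonneg (integral_nonneg (fun u => norm_nonneg _))]
      calc ∫ u in Ioc s (s+a), ‖exp (-(u*t))‖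
          ≤ ∫ u in Ioc s (s+a), exp (-(s*t)) := by
            apply setIntegral_mono_on
            · exact (Continuous.integrableOn_Ioc (by continuity))
            · exact (Continuous.integrableOn_Ioc (by continuity))
            · exact measurableSet_Ioc
            · intro u hu
              rw [Real.norm_eq_abs, abs_exp]
              apply exp_le_exp.mpr
              have : s * t ≤ u * t :=
                mul_le_mul_of_nonneg_right (le_of_lt hu.1) (le_of_lt ht)
              linarith
        _ = a * exp (-s*t) := by
            rw [setIntegral_const, smul_eq_mul, Real.volume_real_Ioc_of_le (by linarith)]
            ring_nf

lemma hs_frullani (s a : ℝ) (hs : 0 < s) (ha : 0 < a) :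
    ∫ t in Ioi (0:ℝ), exp (-(s*t)) * (1 - exp (-(a*t))) / t = Real.log ((s+a)/s) := by
  have inner : ∀ t ∈ Ioi (0:ℝ), exp (-(s*t)) * (1 - exp (-(a*t))) / t
      = ∫ u in Ioc s (s+a), exp (-(u*t)) := by
    intro t ht
    rw [show (∫ u in Ioc s (s+a), exp (-(u*t))) = (exp (-(s*t)) - exp (-((s+a)*t))) / t from by
      rw [← intervalIntegral.integral_of_le (by linarith : s ≤ s+a)]
      have h2 : ∀ u : ℝ, exp (-(u*t)) = exp ((-t)*u) := fun u => by ring_nf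
      simp_rw [h2]
      rw [intervalIntegral.integral_comp_mul_left (fun x => exp x)
        (by simp only [ne_eq, neg_eq_zero]; exact ne_of_gt ht : (-t) ≠ 0)]
      rw [integral_exp]
      have e1 : -t * (s+a) = -((s+a)*t) := by ring
      have e2 : -t * s = -(s*t) := by ring
      rw [e1, e2, smul_eq_mul]
      field_simp
      ring]
    have hsplit : exp (-((s+a)*t)) = exp (-(s*t)) * exp (-(a*t)) := by
      rw [← exp_add]; ring_nf
    rw [hsplit]; ring
  rw [setIntegral_congr_fun measurableSet_Ioi inner]
  rw [MeasureTheory.integral_integral_swap (hs_prod_integrable s a hs ha)]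
  have : ∀ u ∈ Ioc s (s+a), (∫ t in Ioi (0:ℝ), exp (-(u*t))) = u⁻¹ := by
    intro u hu
    exact hs_int_exp_mul u (lt_of_lt_of_le hs hu.1.le)
  rw [setIntegral_congr_fun measurableSet_Ioc this]
  rw [← intervalIntegral.integral_of_le (by linarith : s ≤ s+a)]
  exact integral_inv (by
    intro h
    rcases Set.mem_uIcc.mp h with ⟨h1, _⟩ | ⟨_, h2⟩ <;> linarith)

lemma hs_G_integrable (s : ℝ) (hs : 0 < s) :
    IntegrableOn (fun t => exp (-(s*t)) / (1+t)) (Ioi (0:ℝ)) := by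
  apply Integrable.mono' (exp_neg_integrableOn_Ioi 0 hs)
  · apply ContinuousOn.aestronglyMeasurable _ measurableSet_Ioi
    apply ContinuousOn.div (Continuous.continuousOn (by continuity))
      (Continuous.continuousOn (by continuity))
    intro t ht; simp only [mem_Ioi] at ht; positivity
  · filter_upwards [ae_restrict_mem measurableSet_Ioi] with t ht
    simp only [mem_Ioi] at ht
    rw [Real.norm_eq_abs, abs_div, abs_exp, abs_of_pos (by linarith : (0:ℝ) < 1+t)]
    rw [div_le_iff₀ (by linarith)]
    nlinarith [exp_pos (-(s*t)), exp_le_exp.mpr (by nlinarith : -(s*t) ≤ -s*t)]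

lemma hs_F_integrable (s a : ℝ) (hs : 0 < s) (ha : 0 < a) :
    IntegrableOn (fun t => exp (-(s*t)) * (1 - exp (-(a*t))) / t) (Ioi (0:ℝ)) := by
  apply Integrable.mono' ((exp_neg_integrableOn_Ioi 0 hs).const_mul a)
  · apply ContinuousOn.aestronglyMeasurable _ measurableSet_Ioi
    apply ContinuousOn.div (Continuous.continuousOn (by continuity))
      continuousOn_id
    intro t ht; simp only [mem_Ioi] at ht; exact ne_of_gt ht
  · filter_upwards [ae_restrict_mem measurableSet_Ioi] with t ht
    simp only [mem_Ioi] at ht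
    have h1 : 0 ≤ 1 - exp (-(a*t)) := by
      have : exp (-(a*t)) ≤ 1 := exp_le_one_iff.mpr (by nlinarith)
      linarith
    have h2 : 1 - exp (-(a*t)) ≤ a * t := by
      nlinarith [add_one_le_exp (-(a*t))]
    rw [Real.norm_eq_abs, abs_div, abs_of_pos ht,
      abs_of_nonneg (by positivity : (0:ℝ) ≤ exp (-(s*t)) * (1 - exp (-(a*t))))]
    rw [div_le_iff₀ ht]
    have : exp (-(s*t)) = exp (-s*t) := by ring_nf
    nlinarith [exp_pos (-(s*t)), this ▸ le_refl (exp (-(s*t)))]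

lemma hs_key_ineq (t : ℝ) (ht : 0 ≤ t) : 1 - t ≤ (1+t) * exp (-(2*t)) := by
  have hmono : Monotone (fun t : ℝ => (1+t) * exp (-(2*t)) + t - 1) := by
    have hd : ∀ x : ℝ, HasDerivAt (fun t : ℝ => (1+t) * exp (-(2*t)) + t - 1)
        (1 - (1+2*x) * exp (-(2*x))) x := by
      intro x
      have h1 : HasDerivAt (fun t : ℝ => exp (-(2*t))) (-2 * exp (-(2*x))) x := by
        have hin : HasDerivAt (fun t : ℝ => -(2*t)) (-2) x := by
          exact (((hasDerivAt_id x).const_mul (2:ℝ)).neg).congr_deriv (by simp)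
        simpa [mul_comm] using hin.exp
      have h3 : HasDerivAt (fun t : ℝ => (1+t) * exp (-(2*t)))
          (1 * exp (-(2*x)) + (1+x) * (-2 * exp (-(2*x)))) x :=
        ((hasDerivAt_id x).const_add 1).mul h1
      have h4 := (h3.add (hasDerivAt_id x)).sub_const 1
      exact h4.congr_deriv (by ring)
    apply monotone_of_deriv_nonneg
    · exact fun x => (hd x).differentiableAt
    · intro x
      rw [(hd x).deriv]
      have h5 := add_one_le_exp (2*x)
      have hmul : exp (2*x) * exp (-(2*x)) = 1 := by rw [← exp_add]; simp
      nlinarith [exp_pos (-(2*x)), exp_pos (2*x)]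
  have h0 := hmono ht
  simp only [mul_zero, neg_zero, exp_zero, mul_one] at h0
  linarith [h0]

lemma hs_exp_neg_le_one {x : ℝ} (hx : 0 ≤ x) : exp (-x) ≤ 1 := exp_le_one_iff.mpr (by linarith)

lemma hs_G_le (s : ℝ) (hs : 0 < s) :
    ∫ t in Ioi (0:ℝ), exp (-(s*t)) / (1+t) ≤ Real.log ((s+1)/s) := by
  rw [← hs_frullani s 1 hs one_pos]
  apply setIntegral_mono_on (hs_G_integrable s hs) (hs_F_integrable s 1 hs one_pos)
    measurableSet_Ioi
  intro t ht
  simp only [mem_Ioi] at ht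
  rw [div_le_div_iff₀ (by linarith) ht]
  have h1 : (1+t) * exp (-t) ≤ 1 := by
    nlinarith [add_one_le_exp t, exp_pos (-t), exp_pos t,
      (by rw [← exp_add]; simp : exp t * exp (-t) = 1)]
  have h2 : exp (-(1*t)) = exp (-t) := by norm_num
  rw [h2]
  have h6 : t ≤ (1 - exp (-t)) * (1+t) := by nlinarith
  nlinarith [exp_pos (-(s*t)), h6, mul_le_mul_of_nonneg_left h6 (exp_pos (-(s*t))).le]

lemma hs_G_ge (s : ℝ) (hs : 0 < s) :
    Real.log ((s+2)/s) / 2 ≤ ∫ t in Ioi (0:ℝ), exp (-(s*t)) / (1+t) := by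
  rw [div_le_iff₀ (by norm_num : (0:ℝ) < 2), ← hs_frullani s 2 hs two_pos]
  have h : (∫ t in Ioi (0:ℝ), exp (-(s*t)) / (1+t)) * 2
      = ∫ t in Ioi (0:ℝ), 2 * (exp (-(s*t)) / (1+t)) := by
    rw [MeasureTheory.integral_const_mul]; ring
  rw [h]
  apply setIntegral_mono_on (hs_F_integrable s 2 hs two_pos)
    ((hs_G_integrable s hs).const_mul 2) measurableSet_Ioi
  intro t ht
  simp only [mem_Ioi] at ht
  rw [div_le_iff₀ ht]
  have hk := hs_key_ineq t ht.le
  have h3 : 0 ≤ 1 - exp (-(2*t)) := by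
    linarith [hs_exp_neg_le_one (by linarith : (0:ℝ) ≤ 2*t)]
  have h4 : (1+t) * (1 - exp (-(2*t))) ≤ 2*t := by nlinarith
  have h5 : 2 * (exp (-(s*t)) / (1+t)) * t = exp (-(s*t)) * (2*t) / (1+t) := by
    field_simp
  rw [h5, le_div_iff₀ (by linarith : (0:ℝ) < 1+t)]
  nlinarith [exp_pos (-(s*t))]

lemma hs_sqrt_two_pi_cubed : Real.sqrt (2*π^3) = Real.sqrt (2*π) * π := by
  rw [show 2*π^3 = (2*π) * π^2 by ring, Real.sqrt_mul (by positivity), Real.sqrt_sq pi_pos.le]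

lemma hs_horseshoe_eq (β : ℝ) :
    horseshoeDensity β
      = (1/Real.sqrt (2*π^3)) * ∫ t in Ioi (0:ℝ), exp (-(β^2/2*t)) / (1+t) := by
  unfold horseshoeDensity
  rw [← integral_comp_rpow_Ioi (fun lam => (1 / Real.sqrt (2 * Real.pi * lam ^ 2)) *
      Real.exp (-β ^ 2 / (2 * lam ^ 2)) * (2 / (Real.pi * (1 + lam ^ 2))))
      (p := (-(1/2):ℝ)) (by norm_num)]
  rw [← MeasureTheory.integral_const_mul]
  apply setIntegral_congr_fun measurableSet_Ioi
  intro x hx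
  simp only [mem_Ioi] at hx
  have hsx : 0 < Real.sqrt x := Real.sqrt_pos.mpr hx
  have h2 : (x ^ (-(1/2):ℝ)) ^ (2:ℕ) = x⁻¹ := by
    rw [← rpow_natCast (x ^ (-(1/2):ℝ)) 2, ← rpow_mul hx.le]
    norm_num [rpow_neg_one]
  have h3 : x ^ ((-(1/2):ℝ)-1) = (x * Real.sqrt x)⁻¹ := by
    rw [show ((-(1/2):ℝ)-1) = -(3/2) by norm_num, rpow_neg hx.le]
    congr 1
    rw [show ((3:ℝ)/2) = 1 + 1/2 by norm_num, rpow_add hx, rpow_one, ← Real.sqrt_eq_rpow]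
  have h4 : Real.sqrt (2 * π * x⁻¹) = Real.sqrt (2*π) * (Real.sqrt x)⁻¹ := by
    rw [Real.sqrt_mul (by positivity), Real.sqrt_inv]
  have h5 : -β^2 / (2 * x⁻¹) = -(β^2/2*x) := by field_simp
  have ht : 0 < 1 + x := by linarith
  have hsp : 0 < Real.sqrt (2*π) := Real.sqrt_pos.mpr (by positivity)
  simp only [smul_eq_mul, h2, h3, h4, h5]
  rw [hs_sqrt_two_pi_cubed, show |(-(1/2):ℝ)| = 1/2 by norm_num]
  have hxx : Real.sqrt x * Real.sqrt x = x := Real.mul_self_sqrt hx.le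
  field_simp
  ring_nf

/-- Carvalho–Polson–Scott bounds: with `K = 1/√(2π³)`,
`(K/2) log(1 + 4/β²) ≤ π(β) ≤ K log(1 + 2/β²)` for all `β ≠ 0`. -/
theorem horseshoeDensity_bounds (β : ℝ) (hβ : β ≠ 0) :
    (1 / Real.sqrt (2 * Real.pi ^ 3)) / 2 * Real.log (1 + 4 / β ^ 2) ≤
        horseshoeDensity β ∧
      horseshoeDensity β ≤
        (1 / Real.sqrt (2 * Real.pi ^ 3)) * Real.log (1 + 2 / β ^ 2) := by
  have hb2 : 0 < β^2 := by positivity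
  have hs : 0 < β^2/2 := by linarith
  have hK : 0 < 1 / Real.sqrt (2 * Real.pi ^ 3) := by
    apply div_pos one_pos
    exact Real.sqrt_pos.mpr (by positivity)
  rw [hs_horseshoe_eq β]
  constructor
  · have h1 := hs_G_ge (β^2/2) hs
    have h2 : (β^2/2 + 2)/(β^2/2) = 1 + 4/β^2 := by
      field_simp
      ring
    rw [← h2]
    calc (1 / Real.sqrt (2 * Real.pi ^ 3)) / 2 * Real.log ((β^2/2 + 2)/(β^2/2))
        = (1 / Real.sqrt (2 * Real.pi ^ 3)) * (Real.log ((β^2/2 + 2)/(β^2/2)) / 2) := by ring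
      _ ≤ (1 / Real.sqrt (2 * Real.pi ^ 3)) * ∫ t in Ioi (0:ℝ), exp (-(β^2/2*t)) / (1+t) :=
        mul_le_mul_of_nonneg_left h1 hK.le
  · have h1 := hs_G_le (β^2/2) hs
    have h2 : (β^2/2 + 1)/(β^2/2) = 1 + 2/β^2 := by
      field_simp
    rw [← h2]
    exact mul_le_mul_of_nonneg_left h1 hK.le
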